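/- Neyman–Pearson relation between the trade-off function and the privacy-loss CDFs: let P, Q be mutually absolutely continuous probability measures, let F(x) = P({ω : log((dQ/dP)(ω)) ≤ x}) and G(x) = Q({ω : log((dQ/dP)(ω)) ≤ x}), and let f = T[P,Q]. Then for every x ∈ ℝ, f(1 − F(x)) = G(x). In other words, 1 − F(x) and G(x) are respectively the type I and type II errors of the likelihood ratio test with threshold x, and this test achieves the optimal trade-off. -/

import Mathlib

open MeasureTheory

/-- The trade-off function `T[P,Q](α) = inf {∫ (1−φ) dQ : φ : Ω → [0,1] measurable, ∫ φ dP ≤ α}`. -/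
noncomputable def tradeOff {Ω : Type*} [MeasurableSpace Ω] (P Q : Measure Ω) (α : ℝ) : ℝ :=
  sInf {r : ℝ | ∃ φ : Ω → ℝ, Measurable φ ∧ (∀ ω, φ ω ∈ Set.Icc (0:ℝ) 1) ∧
    (∫ ω, φ ω ∂P) ≤ α ∧ r = ∫ ω, (1 - φ ω) ∂Q}

/-- Neyman–Pearson relation between the trade-off function and the privacy-loss CDFs:
with `F(x) = P(log(dQ/dP) ≤ x)`, `G(x) = Q(log(dQ/dP) ≤ x)` and `f = T[P,Q]`,
`f(1 − F(x)) = G(x)` for every `x ∈ ℝ`. -/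
theorem tradeOff_likelihood_ratio_cdf
    {Ω : Type*} [MeasurableSpace Ω]
    (P Q : Measure Ω) [IsProbabilityMeasure P] [IsProbabilityMeasure Q]
    (hPQ : P ≪ Q) (hQP : Q ≪ P)
    (F G : ℝ → ℝ)
    (hF : ∀ x : ℝ, F x = (P {ω | Real.log ((Q.rnDeriv P ω).toReal) ≤ x}).toReal)
    (hG : ∀ x : ℝ, G x = (Q {ω | Real.log ((Q.rnDeriv P ω).toReal) ≤ x}).toReal) :
    ∀ x : ℝ, tradeOff P Q (1 - F x) = G x := by
  intro x
  set r : Ω → ℝ := fun ω => (Q.rnDeriv P ω).toReal with hr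
  have hrm : Measurable r := (Measure.measurable_rnDeriv Q P).ennreal_toReal
  set A : Set Ω := {ω | Real.log (r ω) ≤ x} with hAdef
  have hA : MeasurableSet A := measurableSet_le (hrm.log) measurable_const
  have hPA : F x = (P A).toReal := hF x
  have hQA : G x = (Q A).toReal := hG x
  -- The indicator test
  set φ₀ : Ω → ℝ := (Aᶜ).indicator (fun _ => (1:ℝ)) with hφ₀
  have hφ₀m : Measurable φ₀ := measurable_const.indicator hA.compl
  have hφ₀mem : ∀ ω, φ₀ ω ∈ Set.Icc (0:ℝ) 1 := by
    intro ω
    by_cases h : ω ∈ Aᶜ <;> simp [hφ₀, h]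
  have hPAc : (P Aᶜ).toReal = 1 - F x := by
    rw [hPA, prob_compl_eq_one_sub hA,
      ENNReal.toReal_sub_of_le prob_le_one (by simp), ENNReal.toReal_one]
  have hφ₀int : (∫ ω, φ₀ ω ∂P) = 1 - F x := by
    rw [hφ₀]
    rw [integral_indicator_const (1:ℝ) hA.compl]
    simp [Measure.real, hPAc]
  have h1φ₀ : (fun ω => 1 - φ₀ ω) = A.indicator (fun _ => (1:ℝ)) := by
    funext ω
    by_cases h : ω ∈ A <;> simp [hφ₀, h]
  have hφ₀res : (∫ ω, (1 - φ₀ ω) ∂Q) = G x := by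
    rw [h1φ₀, integral_indicator_const (1:ℝ) hA, hQA]
    simp [Measure.real]
  have hmem : G x ∈ {s : ℝ | ∃ φ : Ω → ℝ, Measurable φ ∧ (∀ ω, φ ω ∈ Set.Icc (0:ℝ) 1) ∧
      (∫ ω, φ ω ∂P) ≤ 1 - F x ∧ s = ∫ ω, (1 - φ ω) ∂Q} :=
    ⟨φ₀, hφ₀m, hφ₀mem, le_of_eq hφ₀int, hφ₀res.symm⟩
  -- lower bound
  have hlb : ∀ s ∈ {s : ℝ | ∃ φ : Ω → ℝ, Measurable φ ∧ (∀ ω, φ ω ∈ Set.Icc (0:ℝ) 1) ∧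
      (∫ ω, φ ω ∂P) ≤ 1 - F x ∧ s = ∫ ω, (1 - φ ω) ∂Q}, G x ≤ s := by
    rintro s ⟨φ, hφm, hφmem, hφint, rfl⟩
    -- g := (1 - φ) - 1_A
    set g : Ω → ℝ := fun ω => (1 - φ ω) - A.indicator (fun _ => (1:ℝ)) ω with hg
    have hgm : Measurable g := ((measurable_const.sub hφm).sub
      (measurable_const.indicator hA))
    have hgbd : ∀ ω, |g ω| ≤ 2 := by
      intro ω
      have h1 := (hφmem ω).1
      have h2 := (hφmem ω).2
      by_cases h : ω ∈ A
      · simp only [hg, Set.indicator_of_mem h]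
        rw [abs_le]; constructor <;> nlinarith
      · simp only [hg, Set.indicator_of_notMem h]
        rw [abs_le]; constructor <;> nlinarith
    have hgQint : Integrable g Q := by
      refine ⟨hgm.aestronglyMeasurable, ?_⟩
      exact HasFiniteIntegral.of_bounded (C := 2) (Filter.Eventually.of_forall fun ω => by
        simpa using hgbd ω)
    have hrg_int : Integrable (fun ω => r ω • g ω) P :=
      (integrable_rnDeriv_smul_iff hQP).mpr hgQint
    have hgPint : Integrable g P := by
      refine ⟨hgm.aestronglyMeasurable, ?_⟩
      exact HasFiniteIntegral.of_bounded (C := 2) (Filter.Eventually.of_forall fun ω => by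
        simpa using hgbd ω)
    have hconst_int : Integrable (fun ω => Real.exp x • g ω) P := by
      simpa [smul_eq_mul] using hgPint.const_mul (Real.exp x)
    -- pointwise a.e. inequality
    have hae : ∀ᵐ ω ∂P, Real.exp x • g ω ≤ r ω • g ω := by
      filter_upwards [Measure.rnDeriv_pos' hPQ, Measure.rnDeriv_lt_top Q P] with ω hpos hlt
      have hrpos : 0 < r ω := ENNReal.toReal_pos hpos.ne' hlt.ne
      by_cases h : ω ∈ A
      · have hgle : g ω ≤ 0 := by
          simp only [hg, Set.indicator_of_mem h]
          have := (hφmem ω).1; linarith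
        have hrle : r ω ≤ Real.exp x := by
          have : Real.exp (Real.log (r ω)) ≤ Real.exp x := Real.exp_le_exp.mpr h
          rwa [Real.exp_log hrpos] at this
        simpa [smul_eq_mul] using mul_le_mul_of_nonpos_right hrle hgle
      · have hgge : 0 ≤ g ω := by
          simp only [hg, Set.indicator_of_notMem h]
          have := (hφmem ω).2; linarith
        have hrge : Real.exp x ≤ r ω := by
          have hx : x < Real.log (r ω) := lt_of_not_ge h
          have : Real.exp x ≤ Real.exp (Real.log (r ω)) := Real.exp_le_exp.mpr hx.le
          rwa [Real.exp_log hrpos] at this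
        simpa [smul_eq_mul] using mul_le_mul_of_nonneg_right hrge hgge
    have hint_mono : ∫ ω, Real.exp x • g ω ∂P ≤ ∫ ω, r ω • g ω ∂P :=
      integral_mono_ae hconst_int hrg_int hae
    have hQg : ∫ ω, r ω • g ω ∂P = ∫ ω, g ω ∂Q := integral_rnDeriv_smul hQP
    -- compute ∫ g dP ≥ 0
    have hφintP : Integrable φ P := by
      refine ⟨hφm.aestronglyMeasurable, ?_⟩
      refine HasFiniteIntegral.of_bounded (C := 1) (Filter.Eventually.of_forall fun ω => ?_)
      have h1 := (hφmem ω).1; have h2 := (hφmem ω).2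
      simp only [Real.norm_eq_abs]; rw [abs_le]; constructor <;> linarith
    have hindP : Integrable (A.indicator (fun _ => (1:ℝ))) P :=
      (integrable_const (1:ℝ)).indicator hA
    have hsubP : Integrable (fun ω => (1:ℝ) - φ ω) P := by
      refine ⟨(measurable_const.sub hφm).aestronglyMeasurable, ?_⟩
      refine HasFiniteIntegral.of_bounded (C := 1) (Filter.Eventually.of_forall fun ω => ?_)
      have h1 := (hφmem ω).1; have h2 := (hφmem ω).2
      simp only [Real.norm_eq_abs]; rw [abs_le]; constructor <;> linarith
    have hgP : ∫ ω, g ω ∂P = (1 - ∫ ω, φ ω ∂P) - (P A).toReal := by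
      have e1 : ∫ ω, g ω ∂P = (∫ ω, (1 - φ ω) ∂P) - ∫ ω, A.indicator (fun _ => (1:ℝ)) ω ∂P :=
        integral_sub hsubP hindP
      have e2 : ∫ ω, ((1:ℝ) - φ ω) ∂P = (∫ ω, (1:ℝ) ∂P) - ∫ ω, φ ω ∂P :=
        integral_sub (integrable_const (1:ℝ)) hφintP
      rw [e1, e2, integral_indicator_const (1:ℝ) hA]
      simp [Measure.real]
    have hgP_nonneg : 0 ≤ ∫ ω, g ω ∂P := by
      rw [hgP, ← hPA]
      linarith
    have h0 : 0 ≤ ∫ ω, Real.exp x • g ω ∂P := by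
      rw [integral_smul]
      exact smul_nonneg (Real.exp_pos x).le hgP_nonneg
    -- conclude
    have hQg_nonneg : 0 ≤ ∫ ω, g ω ∂Q := by
      rw [← hQg]; exact h0.trans hint_mono
    have hφQint : Integrable (fun ω => 1 - φ ω) Q := by
      refine ⟨(measurable_const.sub hφm).aestronglyMeasurable, ?_⟩
      refine HasFiniteIntegral.of_bounded (C := 1) (Filter.Eventually.of_forall fun ω => ?_)
      have h1 := (hφmem ω).1; have h2 := (hφmem ω).2
      simp only [Real.norm_eq_abs]; rw [abs_le]; constructor <;> linarith
    have hindQ : Integrable (A.indicator (fun _ => (1:ℝ))) Q :=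
      (integrable_const (1:ℝ)).indicator hA
    have hgQ : ∫ ω, g ω ∂Q = (∫ ω, (1 - φ ω) ∂Q) - (Q A).toReal := by
      have e1 : ∫ ω, g ω ∂Q = (∫ ω, (1 - φ ω) ∂Q) - ∫ ω, A.indicator (fun _ => (1:ℝ)) ω ∂Q :=
        integral_sub hφQint hindQ
      rw [e1, integral_indicator_const (1:ℝ) hA]
      simp [Measure.real]
    rw [hgQ] at hQg_nonneg
    rw [hQA]
    linarith
  have hbdd : BddBelow {s : ℝ | ∃ φ : Ω → ℝ, Measurable φ ∧ (∀ ω, φ ω ∈ Set.Icc (0:ℝ) 1) ∧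
      (∫ ω, φ ω ∂P) ≤ 1 - F x ∧ s = ∫ ω, (1 - φ ω) ∂Q} := ⟨G x, hlb⟩
  exact le_antisymm (csInf_le hbdd hmem) (le_csInf ⟨G x, hmem⟩ hlb)
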